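/- Let T be a rigid object in C and let X be an object of C. The following are equivalent: (a) X lies in C(T), i.e. there is a triangle T₁ → T₀ → X → ΣT₁ with T₀, T₁ ∈ add T; (b) for every triangle U → T₀ →f X → ΣU in which f is a right add T-approximation of X, the object U lies in add T; (c) for every triangle U → T₀ →f X → ΣU in which f is a minimal right add T-approximation of X, the object U lies in add T. -/

import Mathlib

/-!
Common setup: `C` is a Hom-finite, Krull-Schmidt (= idempotent complete, given
Hom-finiteness over a field), `k`-linear triangulated category with suspension
functor `Σ = shiftFunctor C (1 : ℤ)`, and `T` is a rigid object of `C`.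
-/

noncomputable section

open CategoryTheory CategoryTheory.Limits CategoryTheory.Pretriangulated

universe v u

namespace PaperBM

variable {C : Type u} [Category.{v} C] [Preadditive C] [HasZeroObject C]
  [HasShift C ℤ] [∀ n : ℤ, (shiftFunctor C n).Additive] [Pretriangulated C]
  [HasFiniteBiproducts C]

/-- `X` lies in `add T`: it is a direct summand of a finite direct sum of copies of `T`. -/
def memAdd (T X : C) : Prop :=
  ∃ (n : ℕ) (s : X ⟶ ⨁ (fun _ : Fin n => T)) (r : (⨁ fun _ : Fin n => T) ⟶ X), s ≫ r = 𝟙 X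

/-- `T` is rigid: `Hom_C(T, ΣT) = 0`. -/
def IsRigidObj (T : C) : Prop := ∀ f : T ⟶ (shiftFunctor C (1 : ℤ)).obj T, f = 0

/-- `Y ∈ T^⊥`, i.e. `Hom_C(X, ΣY) = 0` for all `X ∈ add T`. -/
def memTperp (T Y : C) : Prop :=
  ∀ (X : C), memAdd T X → ∀ f : X ⟶ (shiftFunctor C (1 : ℤ)).obj Y, f = 0

/-- `Y ∈ ⊥T`, i.e. `Hom_C(Y, ΣX) = 0` for all `X ∈ add T`. -/
def memPerpT (T Y : C) : Prop :=
  ∀ (X : C), memAdd T X → ∀ f : Y ⟶ (shiftFunctor C (1 : ℤ)).obj X, f = 0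

/-- `Y ∈ ΣT^⊥`, the image of `T^⊥` under the suspension `Σ`. -/
def memSigmaTperp (T Y : C) : Prop :=
  ∃ Z : C, memTperp T Z ∧ Nonempty (Y ≅ (shiftFunctor C (1 : ℤ)).obj Z)

/-- The map `f` factors through an object belonging to the class `P` of objects. -/
def FactorsThru (P : C → Prop) {A B : C} (f : A ⟶ B) : Prop :=
  ∃ (Z : C) (g : A ⟶ Z) (h : Z ⟶ B), P Z ∧ g ≫ h = f

/-- The class `S̃` of maps `f : X ⟶ Y` such that in a completion
`Σ⁻¹Z →h X →f Y →g Z` of `f` to a triangle (where `A` plays the role of `Σ⁻¹Z`,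
so that `Z = ΣA`), both `g` and `h` factor through an object of `ΣT^⊥`. -/
def Stilde (T : C) : MorphismProperty C := fun X Y f =>
  ∃ (A : C) (h : A ⟶ X) (g : Y ⟶ (shiftFunctor C (1 : ℤ)).obj A),
    (Triangle.mk h f g ∈ distTriang C) ∧
    FactorsThru (memSigmaTperp T) g ∧ FactorsThru (memSigmaTperp T) h

/-- The class `S` of maps `f : X ⟶ Y` such that in a completion
`Σ⁻¹Z →h X →f Y →g Z` of `f` to a triangle (where `A` plays the role of `Σ⁻¹Z`,
so that `Z = ΣA`), `g` factors through an object of `ΣT^⊥` and `Σ⁻¹Z ∈ ΣT^⊥`. -/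
def Sclass (T : C) : MorphismProperty C := fun X Y f =>
  ∃ (A : C) (h : A ⟶ X) (g : Y ⟶ (shiftFunctor C (1 : ℤ)).obj A),
    (Triangle.mk h f g ∈ distTriang C) ∧
    FactorsThru (memSigmaTperp T) g ∧ memSigmaTperp T A

/-- `X ∈ C(T)`: there is a triangle `T₁ → T₀ → X → ΣT₁` with `T₀, T₁ ∈ add T`. -/
def memCT (T X : C) : Prop :=
  ∃ (T₁ T₀ : C) (a : T₁ ⟶ T₀) (b : T₀ ⟶ X) (c : X ⟶ (shiftFunctor C (1 : ℤ)).obj T₁),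
    memAdd T T₁ ∧ memAdd T T₀ ∧ (Triangle.mk a b c ∈ distTriang C)

/-- `f : X₀ ⟶ Y` is a right `P`-approximation of `Y`. -/
def IsRightApprox (P : C → Prop) {X₀ Y : C} (f : X₀ ⟶ Y) : Prop :=
  P X₀ ∧ ∀ (W : C), P W → ∀ g : W ⟶ Y, ∃ g' : W ⟶ X₀, g' ≫ f = g

/-- `f : Y ⟶ X₀` is a left `P`-approximation of `Y`. -/
def IsLeftApprox (P : C → Prop) {Y X₀ : C} (f : Y ⟶ X₀) : Prop :=
  P X₀ ∧ ∀ (W : C), P W → ∀ g : Y ⟶ W, ∃ g' : X₀ ⟶ W, f ≫ g' = g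

/-- The map `f : X₀ ⟶ Y` is right minimal. -/
def IsRightMinimal {X₀ Y : C} (f : X₀ ⟶ Y) : Prop :=
  ∀ g : X₀ ⟶ X₀, g ≫ f = f → IsIso g

/-- The functor `H = Hom_C(T, -) : C ⥤ Mod End_C(T)ᵒᵖ`.  Here, with Mathlib's
conventions, the endomorphism ring `End (Opposite.op T)` of `T` viewed in `Cᵒᵖ` plays
the role of `End_C(T)ᵒᵖ`, so that each `Hom_C(T, X)` is a left module over it. -/
instance paperModuleEndLeftOp {X Y : C} : Module (End (Opposite.op X)) (X ⟶ Y) where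
  smul r f := r.unop ≫ f
  smul_zero _ := Limits.comp_zero
  smul_add _ _ _ := Preadditive.comp_add _ _ _ _ _ _
  add_smul _ _ _ := Preadditive.add_comp _ _ _ _ _ _
  zero_smul _ := Limits.zero_comp
  one_smul _ := Category.id_comp _
  mul_smul _ _ _ := Category.assoc _ _ _

abbrev homFunctor (T : C) : C ⥤ ModuleCat.{v} (End (Opposite.op T)) where
  obj Y := ModuleCat.of _ (T ⟶ Y)
  map f := ModuleCat.ofHom
    { toFun := fun g => g ≫ f
      map_add' := fun _ _ => Preadditive.add_comp _ _ _ _ _ _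
      map_smul' := fun _ _ => Category.assoc _ _ _ }
  map_id _ := ModuleCat.hom_ext (LinearMap.ext fun g => Category.comp_id g)
  map_comp _ _ := ModuleCat.hom_ext (LinearMap.ext fun h => (Category.assoc _ _ _).symm)

/-- The predicate on `End_C(T)ᵒᵖ`-modules of being finite-dimensional (equivalently,
since `End_C(T)` is a finite-dimensional algebra, finitely generated). -/
abbrev isFinDim (T : C) : ModuleCat.{v} (End (Opposite.op T)) → Prop :=
  fun M => Module.Finite (End (Opposite.op T)) M

/-- The category `mod End_C(T)ᵒᵖ` of finite-dimensional `End_C(T)ᵒᵖ`-modules. -/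
abbrev fdMod (T : C) := ObjectProperty.FullSubcategory (isFinDim T)

/-- The ideal relation on `C(T)` of maps factoring through an object of `ΣT^⊥`. -/
def homRelCT (T : C) : HomRel (ObjectProperty.FullSubcategory (memCT T)) :=
  fun A B f g => FactorsThru (memSigmaTperp T) ((f.hom - g.hom : A.obj ⟶ B.obj))

/-- The ideal relation on `C(T)` of maps factoring through an object of `add ΣT`. -/
def homRelCTadd (T : C) : HomRel (ObjectProperty.FullSubcategory (memCT T)) :=
  fun A B f g => FactorsThru (memAdd ((shiftFunctor C (1 : ℤ)).obj T)) ((f.hom - g.hom : A.obj ⟶ B.obj))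

/-- The ideal relation on `C` of maps factoring through an object of `add ΣT`. -/
def homRelAdd (T : C) : HomRel C :=
  fun A B f g => FactorsThru (memAdd ((shiftFunctor C (1 : ℤ)).obj T)) (f - g)

end PaperBM

open PaperBM

section AuxProofs

open CategoryTheory.Category

variable {C : Type u} [Category.{v} C] [Preadditive C] [HasZeroObject C]
  [HasShift C ℤ] [∀ n : ℤ, (shiftFunctor C n).Additive] [Pretriangulated C]
  [HasFiniteBiproducts C]

lemma memAdd_retract {T A B : C} (hA : memAdd T A) (s : B ⟶ A) (r : A ⟶ B)
    (hsr : s ≫ r = 𝟙 B) : memAdd T B := by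
  obtain ⟨n, sa, ra, h⟩ := hA
  refine ⟨n, s ≫ sa, ra ≫ r, ?_⟩
  rw [Category.assoc, ← Category.assoc sa, h, Category.id_comp, hsr]

lemma memAdd_biprod {T A B : C} (hA : memAdd T A) (hB : memAdd T B) :
    memAdd T (A ⊞ B) := by
  obtain ⟨n, sa, ra, ha⟩ := hA
  obtain ⟨m, sb, rb, hb⟩ := hB
  let F : Fin (n + m) → C := fun _ => T
  let ι₁ : (⨁ fun _ : Fin n => T) ⟶ ⨁ F :=
    biproduct.desc fun i => biproduct.ι F (Fin.castAdd m i)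
  let π₁ : (⨁ F) ⟶ ⨁ fun _ : Fin n => T :=
    biproduct.lift fun i => biproduct.π F (Fin.castAdd m i)
  let ι₂ : (⨁ fun _ : Fin m => T) ⟶ ⨁ F :=
    biproduct.desc fun i => biproduct.ι F (Fin.natAdd n i)
  let π₂ : (⨁ F) ⟶ ⨁ fun _ : Fin m => T :=
    biproduct.lift fun i => biproduct.π F (Fin.natAdd n i)
  have h11 : ι₁ ≫ π₁ = 𝟙 _ := by
    apply biproduct.hom_ext; intro j
    apply biproduct.hom_ext'; intro i
    by_cases hij : i = j
    · subst hij; simp [ι₁, π₁, biproduct.ι_π]; rfl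
    · have h2 : Fin.castAdd m i ≠ Fin.castAdd m j := by
        simp only [ne_eq, Fin.castAdd_inj]; exact hij
      simp [ι₁, π₁, biproduct.ι_π, hij, h2]
  have h22 : ι₂ ≫ π₂ = 𝟙 _ := by
    apply biproduct.hom_ext; intro j
    apply biproduct.hom_ext'; intro i
    by_cases hij : i = j
    · subst hij; simp [ι₂, π₂, biproduct.ι_π]; rfl
    · have h2 : Fin.natAdd n i ≠ Fin.natAdd n j := by
        simp only [ne_eq, Fin.ext_iff, Fin.coe_natAdd] at hij ⊢; omega
      simp [ι₂, π₂, biproduct.ι_π, hij, h2]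
  have h12 : ι₁ ≫ π₂ = 0 := by
    apply biproduct.hom_ext; intro j
    apply biproduct.hom_ext'; intro i
    have h2 : Fin.castAdd m i ≠ Fin.natAdd n j := by
      simp only [ne_eq, Fin.ext_iff, Fin.coe_castAdd, Fin.coe_natAdd]
      omega
    simp [ι₁, π₂, biproduct.ι_π, h2]
  have h21 : ι₂ ≫ π₁ = 0 := by
    apply biproduct.hom_ext; intro j
    apply biproduct.hom_ext'; intro i
    have h2 : Fin.natAdd n i ≠ Fin.castAdd m j := by
      simp only [ne_eq, Fin.ext_iff, Fin.coe_castAdd, Fin.coe_natAdd]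
      omega
    simp [ι₂, π₁, biproduct.ι_π, h2]
  refine ⟨n + m, biprod.desc (sa ≫ ι₁) (sb ≫ ι₂), biprod.lift (π₁ ≫ ra) (π₂ ≫ rb), ?_⟩
  apply biprod.hom_ext'
  · apply biprod.hom_ext <;>
      simp [reassoc_of% h11, reassoc_of% h12, reassoc_of% ha, ha, hb]
  · apply biprod.hom_ext <;>
      simp [reassoc_of% h21, reassoc_of% h22, ha, hb]

lemma rigid_vanish {T : C} (hT : IsRigidObj T) {U W : C} (hU : memAdd T U) (hW : memAdd T W)
    (φ : U ⟶ (shiftFunctor C (1 : ℤ)).obj W) : φ = 0 := by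
  obtain ⟨n, s, r, h⟩ := hU
  obtain ⟨m, sw, rw', hw⟩ := hW
  have key0 : ∀ χ : T ⟶ (shiftFunctor C (1 : ℤ)).obj (⨁ fun _ : Fin m => T), χ = 0 := by
    intro χ
    have h0 : χ ≫ (shiftFunctor C (1 : ℤ)).map (𝟙 _) = χ := by
      rw [(shiftFunctor C (1 : ℤ)).map_id, comp_id]
    rw [← h0, ← biproduct.total, CategoryTheory.Functor.map_sum, Preadditive.comp_sum]
    apply Finset.sum_eq_zero
    intro j _
    rw [(shiftFunctor C (1 : ℤ)).map_comp, ← Category.assoc,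
      hT (χ ≫ (shiftFunctor C (1 : ℤ)).map (biproduct.π _ j)), zero_comp]
  have hψ : ∀ ψ : T ⟶ (shiftFunctor C (1 : ℤ)).obj W, ψ = 0 := by
    intro ψ
    have h1 : ψ = (ψ ≫ (shiftFunctor C (1 : ℤ)).map sw) ≫ (shiftFunctor C (1 : ℤ)).map rw' := by
      rw [Category.assoc, ← (shiftFunctor C (1 : ℤ)).map_comp, hw,
        (shiftFunctor C (1 : ℤ)).map_id, comp_id]
    rw [h1, key0 (ψ ≫ _), zero_comp]
  have hr : r ≫ φ = 0 := by
    apply biproduct.hom_ext'; intro i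
    rw [comp_zero]
    exact hψ _
  rw [← Category.id_comp φ, ← h, Category.assoc, hr, comp_zero]

/-- The key comparison lemma. -/
lemma key_compare {T X : C} (hT : IsRigidObj T)
    {U T₀ : C} {u : U ⟶ T₀} {f : T₀ ⟶ X} {w : X ⟶ (shiftFunctor C (1 : ℤ)).obj U}
    (hdist : Triangle.mk u f w ∈ distTriang C) (happrox : IsRightApprox (memAdd T) f)
    {U' T₀' : C} {u' : U' ⟶ T₀'} {f' : T₀' ⟶ X} {w' : X ⟶ (shiftFunctor C (1 : ℤ)).obj U'}
    (hdist' : Triangle.mk u' f' w' ∈ distTriang C)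
    (hT₀' : memAdd T T₀') (hU' : memAdd T U')
    (hfac : ∃ t : T₀ ⟶ T₀', t ≫ f' = f) : memAdd T U := by
  obtain ⟨t, ht⟩ := hfac
  obtain ⟨s, hs⟩ := happrox.2 T₀' hT₀' f'
  -- morphism of triangles (r, s, 𝟙) : (u',f',w') ⟶ (u,f,w)
  obtain ⟨r, hr₁, hr₂⟩ := complete_distinguished_triangle_morphism₁ _ _ hdist' hdist s (𝟙 X)
    (by show f' ≫ 𝟙 X = s ≫ f; rw [comp_id, hs])
  -- morphism of triangles (q, t, 𝟙) : (u,f,w) ⟶ (u',f',w')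
  obtain ⟨q, hq₁, hq₂⟩ := complete_distinguished_triangle_morphism₁ _ _ hdist hdist' t (𝟙 X)
    (by show f ≫ 𝟙 X = t ≫ f'; rw [comp_id, ht])
  let r' : U' ⟶ U := r
  let q' : U ⟶ U' := q
  have hr₂' : w' ≫ (shiftFunctor C (1 : ℤ)).map r' = w := by exact hr₂.trans (Category.id_comp _)
  have hq₂' : w ≫ (shiftFunctor C (1 : ℤ)).map q' = w' := by exact hq₂.trans (Category.id_comp _)
  have hw : w ≫ (shiftFunctor C (1 : ℤ)).map (𝟙 U - q' ≫ r') = 0 := by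
    rw [(shiftFunctor C (1 : ℤ)).map_sub, (shiftFunctor C (1 : ℤ)).map_id,
      Preadditive.comp_sub, (shiftFunctor C (1 : ℤ)).map_comp,
      ← Category.assoc, hq₂', hr₂', comp_id, sub_self]
  obtain ⟨(g₀ : (shiftFunctor C (1 : ℤ)).obj T₀ ⟶ (shiftFunctor C (1 : ℤ)).obj U), hg₀⟩ :=
    Triangle.yoneda_exact₃ _ (rot_of_distTriang _ hdist)
    ((shiftFunctor C (1 : ℤ)).map (𝟙 U - q' ≫ r')) hw
  change (shiftFunctor C (1 : ℤ)).map (𝟙 U - q' ≫ r') = (-(shiftFunctor C (1 : ℤ)).map u) ≫ g₀ at hg₀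
  set δ : T₀ ⟶ U := -((shiftFunctor C (1 : ℤ)).preimage g₀) with hδ
  have hfact : 𝟙 U - q' ≫ r' = u ≫ δ := by
    apply (shiftFunctor C (1 : ℤ)).map_injective
    rw [(shiftFunctor C (1 : ℤ)).map_comp, hδ, (shiftFunctor C (1 : ℤ)).map_neg,
      (shiftFunctor C (1 : ℤ)).map_preimage, hg₀, Preadditive.comp_neg, Preadditive.neg_comp]
  have hsplit : biprod.lift q' u ≫ biprod.desc r' δ = 𝟙 U := by
    rw [biprod.lift_desc, ← hfact]
    abel
  exact memAdd_retract (memAdd_biprod hU' happrox.1) _ _ hsplit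

end AuxProofs

section AuxProofs2

variable {C : Type u} [Category.{v} C] [Preadditive C] [HasZeroObject C]
  [HasShift C ℤ] [∀ n : ℤ, (shiftFunctor C n).Additive] [Pretriangulated C]
  [HasFiniteBiproducts C]

set_option maxHeartbeats 1000000 in
lemma exists_rightApprox (k : Type*) [Field k] [CategoryTheory.Linear k C]
    [∀ X Y : C, FiniteDimensional k (X ⟶ Y)] (T X : C) :
    ∃ (T₀ : C) (f : T₀ ⟶ X), IsRightApprox (memAdd T) f := by
  classical
  let n := Module.finrank k (T ⟶ X)
  let b : Module.Basis (Fin n) k (T ⟶ X) := Module.finBasis k (T ⟶ X)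
  refine ⟨⨁ fun _ : Fin n => T, biproduct.desc fun i => b i,
    ⟨n, 𝟙 _, 𝟙 _, by simp⟩, ?_⟩
  intro W hW g
  obtain ⟨m, s, r, hsr⟩ := hW
  have comp_fac : ∀ c : T ⟶ X, ∃ h : T ⟶ ⨁ fun _ : Fin n => T,
      h ≫ (biproduct.desc fun i => b i) = c := by
    intro c
    refine ⟨∑ i, b.repr c i • biproduct.ι (fun _ : Fin n => T) i, ?_⟩
    rw [Preadditive.sum_comp]
    simp only [Linear.smul_comp, biproduct.ι_desc]
    exact b.sum_repr c
  choose h hh using comp_fac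
  refine ⟨s ≫ biproduct.desc (fun j => h (biproduct.ι (fun _ : Fin m => T) j ≫ r ≫ g)), ?_⟩
  have hD : (biproduct.desc fun j => h (biproduct.ι (fun _ : Fin m => T) j ≫ r ≫ g)) ≫
      (biproduct.desc fun i => b i) = r ≫ g := by
    apply biproduct.hom_ext'; intro j
    rw [← Category.assoc, biproduct.ι_desc, hh]
  rw [Category.assoc, hD, ← Category.assoc, hsr, Category.id_comp]

set_option maxHeartbeats 1000000 in
lemma fitting_step (k : Type*) [Field k] [CategoryTheory.Linear k C]
    [∀ X Y : C, FiniteDimensional k (X ⟶ Y)]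
    {T₀ X : C} (f : T₀ ⟶ X) (g : T₀ ⟶ T₀) (hg : g ≫ f = f) :
    IsIso g ∨ ∃ e : T₀ ⟶ T₀, e ≫ e = e ∧ e ≫ f = f ∧ e ≠ 𝟙 T₀ := by
  classical
  let G : ℕ → (T₀ ⟶ T₀) := fun n => Nat.rec (𝟙 T₀) (fun _ x => x ≫ g) n
  have hG0 : G 0 = 𝟙 T₀ := rfl
  have hGsucc : ∀ n, G (n + 1) = G n ≫ g := fun n => rfl
  have hGf : ∀ n, G n ≫ f = f := by
    intro n; induction n with
    | zero => rw [hG0, Category.id_comp]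
    | succ n ih => rw [hGsucc, Category.assoc, hg, ih]
  have hGadd : ∀ a b, G (a + b) = G a ≫ G b := by
    intro a b; induction b with
    | zero => rw [hG0, Category.comp_id]; rfl
    | succ b ih =>
        rw [show a + (b + 1) = (a + b) + 1 from rfl, hGsucc, hGsucc, ih, Category.assoc]
  let ψ : ℕ → ((T₀ ⟶ T₀) →ₗ[k] (T₀ ⟶ T₀)) := fun n =>
    { toFun := fun x => x ≫ G n
      map_add' := fun x y => Preadditive.add_comp _ _ _ _ _ _
      map_smul' := fun c x => Linear.smul_comp _ _ _ _ _ _ }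
  have hker_mono : Monotone (fun n => LinearMap.ker (ψ n)) := by
    apply monotone_nat_of_le_succ
    intro n x hx
    rw [LinearMap.mem_ker] at hx ⊢
    replace hx : x ≫ G n = 0 := hx
    show x ≫ G (n + 1) = 0
    rw [hGsucc, ← Category.assoc, hx, Limits.zero_comp]
  obtain ⟨n₀, hn₀⟩ := (monotone_stabilizes_iff_noetherian.mpr inferInstance)
    ⟨fun n => LinearMap.ker (ψ n), hker_mono⟩
  let N := n₀ + 1
  have hKeq : LinearMap.ker (ψ N) = LinearMap.ker (ψ (N + N)) := by
    have e1 := hn₀ N (by omega)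
    have e2 := hn₀ (N + N) (by omega)
    replace e1 : LinearMap.ker (ψ n₀) = LinearMap.ker (ψ N) := e1
    replace e2 : LinearMap.ker (ψ n₀) = LinearMap.ker (ψ (N + N)) := e2
    rw [← e1, e2]
  have hdisj : ∀ x, x ∈ LinearMap.ker (ψ N) → x ∈ LinearMap.range (ψ N) → x = 0 := by
    intro x hxK hxI
    obtain ⟨y, hy⟩ := LinearMap.mem_range.mp hxI
    replace hy : y ≫ G N = x := hy
    rw [LinearMap.mem_ker] at hxK
    replace hxK : x ≫ G N = 0 := hxK
    have hy2 : y ∈ LinearMap.ker (ψ (N + N)) := by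
      rw [LinearMap.mem_ker]
      show y ≫ G (N + N) = 0
      rw [hGadd, ← Category.assoc, hy, hxK]
    rw [← hKeq, LinearMap.mem_ker] at hy2
    replace hy2 : y ≫ G N = 0 := hy2
    rw [← hy, hy2]
  have htop : LinearMap.ker (ψ N) ⊔ LinearMap.range (ψ N) = ⊤ := by
    apply Submodule.eq_top_of_finrank_eq
    have hbot : LinearMap.ker (ψ N) ⊓ LinearMap.range (ψ N) = ⊥ := by
      rw [eq_bot_iff]
      intro x hx
      rw [Submodule.mem_bot]
      exact hdisj x hx.1 hx.2
    have hsum := Submodule.finrank_sup_add_finrank_inf_eq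
      (LinearMap.ker (ψ N)) (LinearMap.range (ψ N))
    rw [hbot, finrank_bot, add_zero] at hsum
    have h2 := LinearMap.finrank_range_add_finrank_ker (ψ N)
    omega
  have h1top : (𝟙 T₀ : T₀ ⟶ T₀) ∈ LinearMap.ker (ψ N) ⊔ LinearMap.range (ψ N) := by
    rw [htop]; trivial
  obtain ⟨p, hp, e, he, hpe⟩ := Submodule.mem_sup.mp h1top
  have hKcl : ∀ (a x : T₀ ⟶ T₀), x ∈ LinearMap.ker (ψ N) → a ≫ x ∈ LinearMap.ker (ψ N) := by
    intro a x hx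
    rw [LinearMap.mem_ker] at hx ⊢
    replace hx : x ≫ G N = 0 := hx
    show (a ≫ x) ≫ G N = 0
    rw [Category.assoc, hx, Limits.comp_zero]
  have hIcl : ∀ (a x : T₀ ⟶ T₀), x ∈ LinearMap.range (ψ N) →
      a ≫ x ∈ LinearMap.range (ψ N) := by
    intro a x hx
    obtain ⟨z, hz⟩ := LinearMap.mem_range.mp hx
    replace hz : z ≫ G N = x := hz
    apply LinearMap.mem_range.mpr
    refine ⟨a ≫ z, ?_⟩
    show (a ≫ z) ≫ G N = a ≫ x
    rw [Category.assoc, hz]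
  have hpf : p ≫ f = 0 := by
    have hpK : p ≫ G N = 0 := by
      have h' := hp; rw [LinearMap.mem_ker] at h'; exact h'
    rw [← hGf N, ← Category.assoc, hpK, Limits.zero_comp]
  have hef : e ≫ f = f := by
    have h' : (p + e) ≫ f = f := by rw [hpe, Category.id_comp]
    rw [Preadditive.add_comp, hpf, zero_add] at h'
    exact h'
  have hee : e ≫ e = e := by
    have hsplit : e ≫ p + e ≫ e = e := by
      rw [← Preadditive.comp_add, hpe, Category.comp_id]
    have hep0 : e ≫ p = 0 := by
      apply hdisj
      · exact hKcl e p hp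
      · have h1 : e ≫ e ∈ LinearMap.range (ψ N) := hIcl e e he
        have heq : e ≫ p = e - e ≫ e := by rw [eq_sub_iff_add_eq]; exact hsplit
        rw [heq]
        exact Submodule.sub_mem _ he h1
    rw [hep0, zero_add] at hsplit
    exact hsplit
  by_cases hcase : e = 𝟙 T₀
  · left
    have hK0 : ∀ x : T₀ ⟶ T₀, x ∈ LinearMap.ker (ψ N) → x = 0 := by
      intro x hx
      apply hdisj x hx
      have hxe : x ≫ e ∈ LinearMap.range (ψ N) := hIcl x e he
      rw [hcase, Category.comp_id] at hxe
      exact hxe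
    have hinj : Function.Injective (ψ 1) := by
      rw [← LinearMap.ker_eq_bot, eq_bot_iff]
      intro x hx
      rw [LinearMap.mem_ker] at hx
      replace hx : x ≫ G 1 = 0 := hx
      rw [Submodule.mem_bot]
      apply hK0
      rw [LinearMap.mem_ker]
      show x ≫ G N = 0
      rw [show (N : ℕ) = 1 + n₀ by omega, hGadd, ← Category.assoc, hx, Limits.zero_comp]
    obtain ⟨h, hh⟩ := LinearMap.injective_iff_surjective.mp hinj (𝟙 T₀)
    replace hh : h ≫ G 1 = 𝟙 T₀ := hh
    have hG1 : G 1 = 𝟙 T₀ ≫ g := rfl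
    rw [hG1, Category.id_comp] at hh
    have hgh : g ≫ h = 𝟙 T₀ := by
      apply hinj
      show (g ≫ h) ≫ G 1 = 𝟙 T₀ ≫ G 1
      rw [hG1, Category.id_comp, Category.id_comp, Category.assoc, hh, Category.comp_id]
    exact ⟨h, hgh, hh⟩
  · exact Or.inr ⟨e, hee, hef, hcase⟩

lemma exists_minimal_approx (k : Type*) [Field k] [CategoryTheory.Linear k C]
    [∀ X Y : C, FiniteDimensional k (X ⟶ Y)] [IsIdempotentComplete C] (T X : C) :
    ∃ (T₀ : C) (f : T₀ ⟶ X), IsRightApprox (memAdd T) f ∧ IsRightMinimal f := by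
  classical
  let S : Set ℕ := {r | ∃ (T₀ : C) (f : T₀ ⟶ X), IsRightApprox (memAdd T) f ∧
    Module.finrank k (T₀ ⟶ T₀) = r}
  have hS : S.Nonempty := by
    obtain ⟨T₀, f, hf⟩ := exists_rightApprox k T X
    exact ⟨_, T₀, f, hf, rfl⟩
  obtain ⟨T₀, f, hf, hrank⟩ := Nat.sInf_mem hS
  refine ⟨T₀, f, hf, ?_⟩
  intro g hg
  rcases fitting_step k f g hg with hiso | ⟨e, hee, hef, hne⟩
  · exact hiso
  exfalso
  obtain ⟨Y, i, eY, hie, hei⟩ := IsIdempotentComplete.idempotents_split T₀ e hee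
  have happY : IsRightApprox (memAdd T) (i ≫ f) := by
    constructor
    · exact memAdd_retract hf.1 i eY hie
    · intro W hW gw
      obtain ⟨g', hg'⟩ := hf.2 W hW gw
      refine ⟨g' ≫ eY, ?_⟩
      rw [Category.assoc, ← Category.assoc eY i f, hei, ← hg']
      rw [← Category.assoc, Category.assoc g' e f, hef]
  have hcomp : ∀ x : Y ⟶ Y, i ≫ (eY ≫ x ≫ i) ≫ eY = x := by
    intro x
    simp only [Category.assoc]
    rw [hie, Category.comp_id, ← Category.assoc, hie, Category.id_comp]
  let Φ : (Y ⟶ Y) →ₗ[k] (T₀ ⟶ T₀) :=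
    { toFun := fun x => eY ≫ x ≫ i
      map_add' := fun x y => by
        show eY ≫ (x + y) ≫ i = eY ≫ x ≫ i + eY ≫ y ≫ i
        rw [Preadditive.add_comp, Preadditive.comp_add]
      map_smul' := fun c x => by
        show eY ≫ (c • x) ≫ i = c • (eY ≫ x ≫ i)
        simp only [Linear.smul_comp, Linear.comp_smul] }
  have hinj : Function.Injective Φ := by
    have hleft : Function.LeftInverse (fun y : T₀ ⟶ T₀ => i ≫ y ≫ eY) Φ := fun x => hcomp x
    exact hleft.injective
  have hne_top : LinearMap.range Φ ≠ ⊤ := by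
    intro htop'
    apply hne
    have h1 : (𝟙 T₀ : T₀ ⟶ T₀) ∈ LinearMap.range Φ := by rw [htop']; trivial
    obtain ⟨x, hx⟩ := h1
    have hx' : eY ≫ x ≫ i = 𝟙 T₀ := hx
    have heeY : e ≫ eY = eY := by rw [← hei, Category.assoc, hie, Category.comp_id]
    have hie' : i ≫ e = i := by rw [← hei, ← Category.assoc, hie, Category.id_comp]
    calc e = e ≫ 𝟙 T₀ ≫ e := by rw [Category.id_comp, hee]
    _ = e ≫ (eY ≫ x ≫ i) ≫ e := by rw [hx']
    _ = (e ≫ eY) ≫ x ≫ (i ≫ e) := by simp only [Category.assoc]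
    _ = eY ≫ x ≫ i := by rw [heeY, hie']
    _ = 𝟙 T₀ := hx'
  have hlt : Module.finrank k (Y ⟶ Y) < Module.finrank k (T₀ ⟶ T₀) := by
    rw [← LinearMap.finrank_range_of_inj hinj]
    exact Submodule.finrank_lt hne_top
  have hmem : Module.finrank k (Y ⟶ Y) ∈ S := ⟨Y, i ≫ f, happY, rfl⟩
  have := Nat.sInf_le hmem
  omega

end AuxProofs2


/-- Characterisation of the objects of `C(T)`:
(a) `X ∈ C(T)`; (b) in every triangle `U → T₀ →f X → ΣU` where `f` is a right
`add T`-approximation, `U ∈ add T`; (c) the same for minimal right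
`add T`-approximations.  These three conditions are equivalent. -/
theorem statement_8 {C : Type u} [Category.{v} C] [Preadditive C] [HasZeroObject C]
    [HasShift C ℤ] [∀ n : ℤ, (shiftFunctor C n).Additive] [Pretriangulated C]
    [HasFiniteBiproducts C]
    {k : Type*} [Field k] [CategoryTheory.Linear k C]
    [∀ X Y : C, FiniteDimensional k (X ⟶ Y)] [IsIdempotentComplete C]
    (T : C) (hT : IsRigidObj T) (X : C) :
    (memCT T X ↔
      (∀ (U T₀ : C) (u : U ⟶ T₀) (f : T₀ ⟶ X) (w : X ⟶ (shiftFunctor C (1 : ℤ)).obj U),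
        (Triangle.mk u f w ∈ distTriang C) → IsRightApprox (memAdd T) f → memAdd T U)) ∧
    ((∀ (U T₀ : C) (u : U ⟶ T₀) (f : T₀ ⟶ X) (w : X ⟶ (shiftFunctor C (1 : ℤ)).obj U),
        (Triangle.mk u f w ∈ distTriang C) → IsRightApprox (memAdd T) f → memAdd T U) ↔
      (∀ (U T₀ : C) (u : U ⟶ T₀) (f : T₀ ⟶ X) (w : X ⟶ (shiftFunctor C (1 : ℤ)).obj U),
        (Triangle.mk u f w ∈ distTriang C) → IsRightApprox (memAdd T) f →
          IsRightMinimal f → memAdd T U)) := by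
  constructor
  · constructor
    · rintro ⟨T₁, T₀', a, b, c, hT₁, hT₀', htri⟩ U T₀ u f w htri' happrox
      have hfc : f ≫ c = 0 := rigid_vanish hT happrox.1 hT₁ (f ≫ c)
      obtain ⟨t, ht⟩ := Triangle.coyoneda_exact₃ _ htri f hfc
      exact key_compare hT htri' happrox htri hT₀' hT₁ ⟨t, ht.symm⟩
    · intro hb
      obtain ⟨T₀, f, happrox⟩ := exists_rightApprox k T X
      obtain ⟨U, u, w, htri⟩ := distinguished_cocone_triangle₁ f
      exact ⟨U, T₀, u, f, w, hb U T₀ u f w htri happrox, happrox.1, htri⟩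
  · constructor
    · intro hb U T₀ u f w htri happrox _
      exact hb U T₀ u f w htri happrox
    · intro hc U T₀ u f w htri happrox
      obtain ⟨T₀m, fm, happm, hminm⟩ := exists_minimal_approx k T X
      obtain ⟨Um, um, wm, htrim⟩ := distinguished_cocone_triangle₁ fm
      have hUm : memAdd T Um := hc Um T₀m um fm wm htrim happm hminm
      obtain ⟨t, ht⟩ := happm.2 T₀ happrox.1 f
      exact key_compare hT htri happrox htrim happm.1 hUm ⟨t, ht⟩
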